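/- Let n be an even positive integer and ξ a complex non-real algebraic number of degree greater than n with t_n(ξ) > (n+1)/2. Then ξ + ξ̄ and ξ·ξ̄ both lie in ℚ(ξ), so that [ℚ(ξ) : ℚ(ξ) ∩ ℝ] = 2. -/

import Mathlib

open Polynomial

/-- The ℚ-vector space of polynomials `f ∈ ℚ[X]` of degree at most `n`
with `μ * f(ξ) ∈ ℝ`. -/
noncomputable def Vspace (n : ℕ) (μ ξ : ℂ) : Submodule ℚ ℚ[X] where
  carrier := {f | f.natDegree ≤ n ∧ ∃ r : ℝ, μ * aeval ξ f = (r : ℂ)}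
  zero_mem' := ⟨by simp, 0, by simp⟩
  add_mem' := by
    rintro f g ⟨hf, r, hr⟩ ⟨hg, s, hs⟩
    refine ⟨(natDegree_add_le f g).trans (by simp [hf, hg]), r + s, ?_⟩
    push_cast
    rw [map_add, mul_add, hr, hs]
  smul_mem' := by
    rintro c f ⟨hf, r, hr⟩
    refine ⟨(natDegree_smul_le c f).trans hf, c * r, ?_⟩
    rw [map_smul, Algebra.mul_smul_comm, hr, Rat.smul_def]
    push_cast
    ring

/-- `t_n(ξ)`: the maximum over nonzero `μ ∈ ℂ` of `dim_ℚ V_n(μ,ξ)`. -/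
noncomputable def tdeg (n : ℕ) (ξ : ℂ) : ℕ :=
  sSup {d : ℕ | ∃ μ : ℂ, μ ≠ 0 ∧ d = Module.finrank ℚ (Vspace n μ ξ)}

/-- The subfield of real elements of `ℂ`, as an intermediate field of `ℚ ⊆ ℂ`. -/
noncomputable def realSubfield : IntermediateField ℚ ℂ :=
  Subfield.toIntermediateField Complex.ofRealHom.fieldRange
    (fun x => ⟨(x : ℝ), by simp⟩)

lemma conj_aeval' (z : ℂ) (p : ℚ[X]) :
    (starRingEnd ℂ) (aeval z p) = aeval ((starRingEnd ℂ) z) p := by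
  have := Polynomial.aeval_algHom_apply
    ((Complex.conjAe.toAlgHom).restrictScalars ℚ) z p
  simpa using this.symm

lemma aeval_mem_IF {z : ℂ} (K : IntermediateField ℚ ℂ) (hz : z ∈ K) (p : ℚ[X]) :
    aeval z p ∈ K := by
  have hz' : z ∈ K.toSubalgebra := hz
  have h2 := Polynomial.coe_aeval_mk_apply (S := K.toSubalgebra) (x := z) (p := p) hz'
  rw [← IntermediateField.mem_toSubalgebra, ← h2]
  exact SetLike.coe_mem _

lemma mem_realSubfield_iff (z : ℂ) : z ∈ realSubfield ↔ z.im = 0 := by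
  constructor
  · rintro ⟨r, rfl⟩
    simp
  · intro h
    exact ⟨z.re, by apply Complex.ext <;> simp [h]⟩

lemma Vspace_le_degreeLT (n : ℕ) (μ ξ : ℂ) : Vspace n μ ξ ≤ degreeLT ℚ (n + 1) := by
  intro f hf
  rw [Polynomial.mem_degreeLT]
  calc f.degree ≤ (f.natDegree : WithBot ℕ) := degree_le_natDegree
  _ < ((n + 1 : ℕ) : WithBot ℕ) := by exact_mod_cast Nat.lt_succ_of_le hf.1

lemma finrank_degreeLT (m : ℕ) : Module.finrank ℚ (degreeLT ℚ m) = m := by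
  rw [LinearEquiv.finrank_eq (degreeLTEquiv ℚ m), Module.finrank_fin_fun]

instance fd_degreeLT (m : ℕ) : FiniteDimensional ℚ (degreeLT ℚ m) :=
  Module.Finite.equiv (degreeLTEquiv ℚ m).symm

theorem trace_norm_mem_and_index_two_of_large_tdeg (n : ℕ) (hn : 0 < n)
    (hne : Even n) (ξ : ℂ) (hξreal : ξ.im ≠ 0) (hξalg : IsAlgebraic ℚ ξ)
    (hdeg : n < (minpoly ℚ ξ).natDegree)
    (ht : n + 1 < 2 * tdeg n ξ) :
    ξ + (starRingEnd ℂ) ξ ∈ IntermediateField.adjoin ℚ {ξ} ∧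
    ξ * (starRingEnd ℂ) ξ ∈ IntermediateField.adjoin ℚ {ξ} ∧
    2 * Module.finrank ℚ
      (IntermediateField.adjoin ℚ {ξ} ⊓ realSubfield : IntermediateField ℚ ℂ)
      = (minpoly ℚ ξ).natDegree := by
  classical
  set ξ' := (starRingEnd ℂ) ξ with hξ'def
  set K := IntermediateField.adjoin ℚ {ξ} with hKdef
  have hξK : ξ ∈ K := IntermediateField.mem_adjoin_simple_self ℚ ξ
  have hξint : IsIntegral ℚ ξ := hξalg.isIntegral
  have hξne : ξ' ≠ ξ := fun h => hξreal (Complex.conj_eq_iff_im.mp h)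
  -- evaluation at ξ is injective on polys of degree ≤ n
  have evalinj : ∀ f : ℚ[X], f.natDegree ≤ n → aeval ξ f = 0 → f = 0 := by
    intro f hdf hf0
    by_contra hne0
    have hdvd : minpoly ℚ ξ ∣ f := minpoly.dvd ℚ ξ hf0
    have := Polynomial.natDegree_le_of_dvd hdvd hne0
    omega
  -- realize tdeg
  have hbdd : BddAbove {d : ℕ | ∃ μ : ℂ, μ ≠ 0 ∧ d = Module.finrank ℚ (Vspace n μ ξ)} := by
    refine ⟨n + 1, ?_⟩
    rintro d ⟨μ, -, rfl⟩
    haveI : FiniteDimensional ℚ (Vspace n μ ξ) :=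
      Submodule.finiteDimensional_of_le (Vspace_le_degreeLT n μ ξ)
    have := Submodule.finrank_mono (Vspace_le_degreeLT n μ ξ)
    rwa [finrank_degreeLT] at this
  have hmem : tdeg n ξ ∈ {d : ℕ | ∃ μ : ℂ, μ ≠ 0 ∧ d = Module.finrank ℚ (Vspace n μ ξ)} :=
    Nat.sSup_mem ⟨Module.finrank ℚ (Vspace n 1 ξ), 1, one_ne_zero, rfl⟩ hbdd
  obtain ⟨μ, hμ0, htd⟩ := hmem
  set V := Vspace n μ ξ with hVdef
  haveI hVfd : FiniteDimensional ℚ V :=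
    Submodule.finiteDimensional_of_le (Vspace_le_degreeLT n μ ξ)
  have h2t : n + 2 ≤ 2 * Module.finrank ℚ V := by omega
  -- a nonzero g in V
  have hVnontriv : Nontrivial V := by
    apply Module.nontrivial_of_finrank_pos (R := ℚ)
    omega
  obtain ⟨g', hg'⟩ := exists_ne (0 : V)
  set g : ℚ[X] := (g' : ℚ[X]) with hgdef
  have hgV : g ∈ V := g'.2
  have hg0 : g ≠ 0 := fun h => hg' (Subtype.ext h)
  set G : ℂ := aeval ξ g with hGdef
  set G' : ℂ := aeval ξ' g with hG'def
  have hG0 : G ≠ 0 := fun h => hg0 (evalinj g hgV.1 h)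
  have hG'0 : G' ≠ 0 := by
    rw [hG'def, ← conj_aeval']
    simpa using hG0
  -- the fundamental relation
  have rel : ∀ f : ℚ[X], f ∈ V → aeval ξ' f * G = aeval ξ f * G' := by
    intro f hf
    obtain ⟨hfd, r, hr⟩ := hf
    obtain ⟨-, s, hs⟩ := hgV
    have hrc : (starRingEnd ℂ) μ * aeval ξ' f = (r : ℂ) := by
      have := congrArg (starRingEnd ℂ) hr
      simpa [conj_aeval'] using this
    have hsc : (starRingEnd ℂ) μ * G' = (s : ℂ) := by
      have := congrArg (starRingEnd ℂ) hs
      simpa [conj_aeval'] using this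
    have hμc : (starRingEnd ℂ) μ ≠ 0 := by simpa using hμ0
    have key : (aeval ξ' f * G) * ((starRingEnd ℂ) μ * μ)
        = (aeval ξ f * G') * ((starRingEnd ℂ) μ * μ) := by
      linear_combination (μ * G) * hrc + (r : ℂ) * hs - ((starRingEnd ℂ) μ * G') * hr
        - (r : ℂ) * hsc
    exact mul_right_cancel₀ (mul_ne_zero hμc hμ0) key
  -- V ⊓ X•V = ⊥
  have hXinj : Function.Injective (LinearMap.mulLeft ℚ (X : ℚ[X])) := by
    intro a b hab
    exact mul_left_cancel₀ Polynomial.X_ne_zero (by simpa using hab)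
  set XV : Submodule ℚ ℚ[X] := V.map (LinearMap.mulLeft ℚ (X : ℚ[X])) with hXVdef
  have hinf : V ⊓ XV = ⊥ := by
    rw [Submodule.eq_bot_iff]
    rintro x ⟨hxV, hxXV⟩
    obtain ⟨h, hhV, rfl⟩ := hxXV
    have r1 := rel h hhV
    have r2 := rel _ hxV
    simp only [LinearMap.mulLeft_apply, map_mul, aeval_X] at r2 ⊢
    have hkey : aeval ξ h * G' * (ξ - ξ') = 0 := by
      linear_combination ξ' * r1 - r2
    have h0 : aeval ξ h = 0 := by
      rcases mul_eq_zero.mp hkey with h' | h'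
      · rcases mul_eq_zero.mp h' with h'' | h''
        · exact h''
        · exact absurd h'' hG'0
      · exact absurd (sub_eq_zero.mp h') (fun hh => hξne hh.symm)
    rw [evalinj h hhV.1 h0, mul_zero]
  -- V ⊔ XV is everything of degree < n+2
  haveI hXVfd : FiniteDimensional ℚ XV := Module.Finite.map V _
  have hXVle : XV ≤ degreeLT ℚ (n + 2) := by
    rintro x ⟨h, hhV, rfl⟩
    simp only [LinearMap.mulLeft_apply]
    rw [Polynomial.mem_degreeLT]
    calc (X * h).degree ≤ ((X * h).natDegree : WithBot ℕ) := degree_le_natDegree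
    _ < ((n + 2 : ℕ) : WithBot ℕ) := by
        have := natDegree_mul_le (p := (X : ℚ[X])) (q := h)
        have h2 := hhV.1
        have h3 : (X : ℚ[X]).natDegree = 1 := natDegree_X
        exact_mod_cast by omega
  have hVle2 : V ≤ degreeLT ℚ (n + 2) := by
    refine (Vspace_le_degreeLT n μ ξ).trans ?_
    intro x hx
    rw [Polynomial.mem_degreeLT] at hx ⊢
    refine hx.trans_le ?_
    exact_mod_cast by omega
  have hfrXV : Module.finrank ℚ XV = Module.finrank ℚ V :=
    (Submodule.equivMapOfInjective _ hXinj V).finrank_eq.symm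
  have hsupfr : Module.finrank ℚ ↥(V ⊔ XV) = 2 * Module.finrank ℚ V := by
    have h := Submodule.finrank_sup_add_finrank_inf_eq V XV
    rw [hinf, finrank_bot] at h
    omega
  have hsup : V ⊔ XV = degreeLT ℚ (n + 2) := by
    apply Submodule.eq_of_le_of_finrank_le (sup_le hVle2 hXVle)
    rw [finrank_degreeLT, hsupfr]
    omega
  have decomp : ∀ w : ℚ[X], w.degree < ((n + 2 : ℕ) : WithBot ℕ) →
      ∃ f h, f ∈ V ∧ h ∈ V ∧ w = f + X * h := by
    intro w hw
    have hw' : w ∈ V ⊔ XV := by rw [hsup]; exact Polynomial.mem_degreeLT.mpr hw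
    obtain ⟨f, hf, z, hz, hfz⟩ := Submodule.mem_sup.mp hw'
    obtain ⟨h, hh, rfl⟩ := hz
    exact ⟨f, h, hf, hh, by rw [← hfz]; simp⟩
  obtain ⟨f₀, h₀, hf₀, hh₀, d₀⟩ := decomp 1 (by
    rw [degree_one]; exact_mod_cast Nat.succ_pos _)
  obtain ⟨f₁, h₁, hf₁, hh₁, d₁⟩ := decomp X (by
    rw [degree_X]; exact_mod_cast by omega)
  obtain ⟨f₂, h₂, hf₂, hh₂, d₂⟩ := decomp (X ^ 2) (by
    rw [degree_X_pow]; exact_mod_cast by omega)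
  -- evaluate the decompositions
  have e0 : (1 : ℂ) = aeval ξ f₀ + ξ * aeval ξ h₀ := by
    have := congrArg (aeval ξ) d₀; simpa using this
  have e1 : ξ = aeval ξ f₁ + ξ * aeval ξ h₁ := by
    have := congrArg (aeval ξ) d₁; simpa using this
  have e2 : ξ ^ 2 = aeval ξ f₂ + ξ * aeval ξ h₂ := by
    have := congrArg (aeval ξ) d₂; simpa using this
  have e0' : (1 : ℂ) = aeval ξ' f₀ + ξ' * aeval ξ' h₀ := by
    have := congrArg (aeval ξ') d₀; simpa using this
  have e1' : ξ' = aeval ξ' f₁ + ξ' * aeval ξ' h₁ := by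
    have := congrArg (aeval ξ') d₁; simpa using this
  have e2' : ξ' ^ 2 = aeval ξ' f₂ + ξ' * aeval ξ' h₂ := by
    have := congrArg (aeval ξ') d₂; simpa using this
  have D0 : G = aeval ξ f₀ * G' + ξ' * (aeval ξ h₀ * G') := by
    linear_combination G * e0' + rel f₀ hf₀ + ξ' * rel h₀ hh₀
  have D1 : ξ' * G = aeval ξ f₁ * G' + ξ' * (aeval ξ h₁ * G') := by
    linear_combination G * e1' + rel f₁ hf₁ + ξ' * rel h₁ hh₁
  have D2 : ξ' ^ 2 * G = aeval ξ f₂ * G' + ξ' * (aeval ξ h₂ * G') := by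
    linear_combination G * e2' + rel f₂ hf₂ + ξ' * rel h₂ hh₂
  have key : (ξ' - ξ) * (1 + ξ' * aeval ξ h₀ - aeval ξ h₁) * G' = 0 := by
    linear_combination D1 - ξ' * D0 + ξ' * G' * e0 - G' * e1
  have key2 : 1 + ξ' * aeval ξ h₀ - aeval ξ h₁ = 0 := by
    rcases mul_eq_zero.mp key with h' | h'
    · rcases mul_eq_zero.mp h' with h'' | h''
      · exact absurd (sub_eq_zero.mp h'') hξne
      · exact h''
    · exact absurd h' hG'0
  -- conclude ξ' ∈ K
  have hξ'K : ξ' ∈ K := by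
    by_cases hb : aeval ξ h₀ = 0
    · have hGG' : G = G' := by
        linear_combination D0 + (ξ' * G' - ξ * G') * hb - G' * e0
      have key3 : (ξ' - ξ) * (ξ' + ξ - aeval ξ h₂) * G' = 0 := by
        linear_combination D2 - ξ' ^ 2 * hGG' - G' * e2
      have h3 : ξ' + ξ - aeval ξ h₂ = 0 := by
        rcases mul_eq_zero.mp key3 with h' | h'
        · rcases mul_eq_zero.mp h' with h'' | h''
          · exact absurd (sub_eq_zero.mp h'') hξne
          · exact h''
        · exact absurd h' hG'0
      have : ξ' = aeval ξ h₂ - ξ := by linear_combination h3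
      rw [this]
      exact sub_mem (aeval_mem_IF K hξK h₂) hξK
    · have : ξ' = (aeval ξ h₁ - 1) / aeval ξ h₀ := by
        rw [eq_div_iff hb]
        linear_combination key2
      rw [this]
      exact K.div_mem (sub_mem (aeval_mem_IF K hξK h₁) K.one_mem) (aeval_mem_IF K hξK h₀)
  refine ⟨add_mem hξK hξ'K, mul_mem hξK hξ'K, ?_⟩
  -- the index-two computation
  have hstab : ∀ z, z ∈ K → (starRingEnd ℂ) z ∈ K := by
    intro z hz
    have hz' : z ∈ Algebra.adjoin ℚ ({ξ} : Set ℂ) := by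
      rw [← IntermediateField.adjoin_simple_toSubalgebra_of_isAlgebraic hξalg]
      exact hz
    rw [Algebra.adjoin_singleton_eq_range_aeval, AlgHom.mem_range] at hz'
    obtain ⟨p, rfl⟩ := hz'
    rw [conj_aeval']
    exact aeval_mem_IF K hξ'K p
  set δ : ℂ := ξ - ξ' with hδdef
  have hδ0 : δ ≠ 0 := sub_ne_zero.mpr (fun h => hξne h.symm)
  have hδre : δ.re = 0 := by rw [hδdef, hξ'def]; simp
  have hδK : δ ∈ K := sub_mem hξK hξ'K
  have hδconj : (starRingEnd ℂ) δ = -δ := by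
    rw [hδdef, hξ'def, map_sub, Complex.conj_conj]
    ring
  set M : Submodule ℚ ℂ := Subalgebra.toSubmodule (K ⊓ realSubfield).toSubalgebra with hMdef
  set KM : Submodule ℚ ℂ := Subalgebra.toSubmodule K.toSubalgebra with hKMdef
  set N : Submodule ℚ ℂ := M.map (LinearMap.mulLeft ℚ δ) with hNdef
  have hmemKM : ∀ z : ℂ, z ∈ KM ↔ z ∈ K := fun z => Iff.rfl
  have hmemM : ∀ z : ℂ, z ∈ M ↔ z ∈ K ∧ z.im = 0 := by
    intro z
    rw [hMdef, Subalgebra.mem_toSubmodule, IntermediateField.mem_toSubalgebra,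
      IntermediateField.mem_inf, mem_realSubfield_iff]
  have hδinj : Function.Injective (LinearMap.mulLeft ℚ δ) := by
    intro a b hab
    exact mul_left_cancel₀ hδ0 (by simpa using hab)
  have hMNinf : M ⊓ N = ⊥ := by
    rw [Submodule.eq_bot_iff]
    rintro x ⟨hxM, y, hyM, rfl⟩
    have hyim : y.im = 0 := ((hmemM y).mp hyM).2
    have hxim : (δ * y).im = 0 := by
      have := ((hmemM _).mp (by simpa using hxM)).2
      simpa using this
    simp only [LinearMap.mulLeft_apply]
    apply Complex.ext
    · simp [Complex.mul_re, hδre, hyim]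
    · simpa using hxim
  have hsupKM : M ⊔ N = KM := by
    apply le_antisymm
    · apply sup_le
      · intro x hx
        exact (hmemKM x).mpr ((hmemM x).mp hx).1
      · rintro x ⟨y, hyM, rfl⟩
        refine (hmemKM _).mpr ?_
        simp only [LinearMap.mulLeft_apply]
        exact mul_mem hδK ((hmemM y).mp hyM).1
    · intro z hz
      have hzK : z ∈ K := hz
      have hzc : (starRingEnd ℂ) z ∈ K := hstab z hzK
      have h2K : (2 : ℂ) ∈ K := by
        have := natCast_mem K 2
        simpa using this
      set u : ℂ := (z + (starRingEnd ℂ) z) / 2 with hudef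
      set v : ℂ := (z - (starRingEnd ℂ) z) / (2 * δ) with hvdef
      have huK : u ∈ K := K.div_mem (add_mem hzK hzc) h2K
      have hvK : v ∈ K := K.div_mem (sub_mem hzK hzc) (mul_mem h2K hδK)
      have huim : u.im = 0 := by
        rw [hudef, Complex.add_conj]
        simp
      have hvim : v.im = 0 := by
        rw [← Complex.conj_eq_iff_im]
        rw [hvdef, map_div₀, map_sub, map_mul, Complex.conj_conj, hδconj]
        rw [map_ofNat (starRingEnd ℂ) 2, mul_neg, div_neg, ← neg_div, neg_sub]
      have hzuv : z = u + δ * v := by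
        rw [hudef, hvdef]
        field_simp
        ring
      exact Submodule.mem_sup.mpr ⟨u, (hmemM u).mpr ⟨huK, huim⟩,
        δ * v, ⟨v, (hmemM v).mpr ⟨hvK, hvim⟩, by simp⟩, hzuv.symm⟩
  haveI hKfd : FiniteDimensional ℚ K := IntermediateField.adjoin.finiteDimensional hξint
  haveI hKMfd : FiniteDimensional ℚ KM := hKfd
  haveI hMfd : FiniteDimensional ℚ M :=
    Submodule.finiteDimensional_of_le (le_trans le_sup_left hsupKM.le)
  haveI hNfd : FiniteDimensional ℚ N :=
    Submodule.finiteDimensional_of_le (le_trans le_sup_right hsupKM.le)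
  have hNM : Module.finrank ℚ N = Module.finrank ℚ M :=
    (Submodule.equivMapOfInjective _ hδinj M).finrank_eq.symm
  have hKM2M : Module.finrank ℚ KM = 2 * Module.finrank ℚ M := by
    rw [← hsupKM]
    have h := Submodule.finrank_sup_add_finrank_inf_eq M N
    rw [hMNinf, finrank_bot] at h
    omega
  have hfinK : Module.finrank ℚ K = (minpoly ℚ ξ).natDegree :=
    IntermediateField.adjoin.finrank hξint
  have hKMK : Module.finrank ℚ KM = Module.finrank ℚ K := rfl
  have hMF : Module.finrank ℚ M
      = Module.finrank ℚ (K ⊓ realSubfield : IntermediateField ℚ ℂ) := rfl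
  omega
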